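/- arXiv:1809.10997 — 2 statements merged into one kernel-verified Lean document; each statement's English description precedes it below -/
import Mathlib

section
/- Let K be a field of characteristic zero, let α_1,…,α_m ∈ K be pairwise distinct and nonzero, let l ≥ 1, and let σ_i be defined by Π_{i=1}^m (α_i − w)^l = Σ_{i=0}^{ml} σ_i w^i. Then for every j ∈ {1,…,m}, Σ_{i=0}^{ml} σ_i · i^l · α_j^i = (−1)^l · l! · α_j^l · Π_{i≠j} (α_i − α_j)^l, which is nonzero. -/
open Polynomial Finset

private lemma theta_coeff {F : Type*} [Field F] (p : F[X]) (i : ℕ) :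
    (X * derivative p).coeff i = (i : F) * p.coeff i := by
  cases i with
  | zero => simp
  | succ n =>
    rw [coeff_X_mul, coeff_derivative]
    push_cast
    ring

private lemma theta_iter_coeff {F : Type*} [Field F] (l : ℕ) (p : F[X]) (i : ℕ) :
    ((fun q : F[X] => X * derivative q)^[l] p).coeff i = (i : F) ^ l * p.coeff i := by
  induction l with
  | zero => simp
  | succ k ih =>
    rw [Function.iterate_succ_apply', theta_coeff, ih]
    ring

private lemma theta_natDegree {F : Type*} [Field F] (p : F[X]) :
    (X * derivative p).natDegree ≤ p.natDegree := by
  rcases eq_or_ne (derivative p) 0 with h | h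
  · simp [h]
  · have h1 : 1 ≤ p.natDegree := by
      by_contra hh
      push_neg at hh
      have : p.natDegree = 0 := by omega
      obtain ⟨c, rfl⟩ := Polynomial.natDegree_eq_zero.mp this
      simp at h
    calc (X * derivative p).natDegree ≤ X.natDegree + (derivative p).natDegree :=
          natDegree_mul_le
      _ ≤ 1 + (p.natDegree - 1) := by
          exact add_le_add (by simp) (natDegree_derivative_le p)
      _ ≤ p.natDegree := by omega

private lemma theta_iter_natDegree {F : Type*} [Field F] (l : ℕ) (p : F[X]) :
    ((fun q : F[X] => X * derivative q)^[l] p).natDegree ≤ p.natDegree := by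
  induction l with
  | zero => simp
  | succ k ih =>
    rw [Function.iterate_succ_apply']
    exact le_trans (theta_natDegree _) ih

private lemma theta_key {F : Type*} [Field F] (a : F) (n : ℕ) (R : F[X]) :
    ∀ k, k ≤ n → ∃ S : F[X],
      (fun q : F[X] => X * derivative q)^[k] ((C a - X) ^ n * R) = (C a - X) ^ (n - k) * S ∧
      S.eval a = (-1) ^ k * a ^ k * (n.descFactorial k : F) * R.eval a := by
  intro k
  induction k with
  | zero => intro _; exact ⟨R, by simp, by simp⟩
  | succ t ih =>
    intro hk
    obtain ⟨S, hS, hSe⟩ := ih (Nat.le_of_succ_le hk)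
    obtain ⟨u, hu⟩ : ∃ u, n - t = u + 1 := ⟨n - (t + 1), by omega⟩
    refine ⟨X * ((C a - X) * derivative S - (↑(u + 1) : F[X]) * S), ?_, ?_⟩
    · rw [Function.iterate_succ_apply', hS, hu]
      have hnt : n - (t + 1) = u := by omega
      rw [hnt]
      rw [derivative_mul, derivative_pow, derivative_sub, derivative_C, derivative_X]
      simp only [← C_eq_natCast, Nat.cast_add, Nat.cast_one, C_add, C_1,
        Nat.add_sub_cancel, Nat.add_sub_cancel_left]
      ring
    · have heval : ((X : F[X]) * ((C a - X) * derivative S - (↑(u + 1) : F[X]) * S)).eval a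
          = a * ((a - a) * (derivative S).eval a - (u + 1 : ℕ) * S.eval a) := by
        simp
      rw [heval, hSe]
      have hdf : (n.descFactorial (t + 1) : F) = ((n - t : ℕ) : F) * (n.descFactorial t : F) := by
        rw [Nat.descFactorial_succ]
        push_cast
        ring
      rw [hdf, hu]
      push_cast
      ring

/-- with `σ_i` defined by `∏ i, (α i − w)^l = ∑ i, σ i * w^i`,
for pairwise distinct nonzero `α₁,…,α_m` in a field of characteristic zero one has
`∑_{i=0}^{ml} σ i * i^l * (α j)^i = (−1)^l · l! · (α j)^l · ∏_{i ≠ j} (α i − α j)^l ≠ 0`. -/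
theorem sigma_power_sum_eq_vandermonde {F : Type*} [Field F] [CharZero F]
    {m : ℕ} (α : Fin m → F) (hα0 : ∀ i, α i ≠ 0) (hinj : Function.Injective α)
    (l : ℕ) (hl : 1 ≤ l)
    (σ : ℕ → F)
    (hσ : ∀ i, σ i = (∏ i, (C (α i) - X) ^ l).coeff i)
    (j : Fin m) :
    ∑ i ∈ range (m * l + 1), σ i * (i : F) ^ l * (α j) ^ i
        = (-1) ^ l * (Nat.factorial l : F) * (α j) ^ l *
            ∏ i ∈ univ.erase j, (α i - α j) ^ l ∧
      ∑ i ∈ range (m * l + 1), σ i * (i : F) ^ l * (α j) ^ i ≠ 0 := by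
  set P : F[X] := ∏ i, (C (α i) - X) ^ l with hP
  set a := α j with ha
  set Q : F[X] := ∏ i ∈ univ.erase j, (C (α i) - X) ^ l with hQ
  -- degree bound
  have hdeg1 : ∀ i : Fin m, ((C (α i) - X) ^ l).natDegree = l := by
    intro i
    have h1 : (C (α i) - X).natDegree = 1 := by
      rw [show C (α i) - X = -(X - C (α i)) by ring, natDegree_neg, natDegree_X_sub_C]
    rw [natDegree_pow, h1, mul_one]
  have hdegP : P.natDegree ≤ m * l := by
    calc P.natDegree ≤ ∑ i : Fin m, ((C (α i) - X) ^ l).natDegree := natDegree_prod_le _ _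
      _ = m * l := by simp [hdeg1, mul_comm]
  -- sum = eval of iterated theta
  have hsum : ∑ i ∈ range (m * l + 1), σ i * (i : F) ^ l * (α j) ^ i
      = ((fun q : F[X] => X * derivative q)^[l] P).eval a := by
    have hlt : ((fun q : F[X] => X * derivative q)^[l] P).natDegree < m * l + 1 :=
      lt_of_le_of_lt (le_trans (theta_iter_natDegree l P) hdegP) (by omega)
    rw [eval_eq_sum_range' hlt]
    refine Finset.sum_congr rfl fun i _ => ?_
    rw [theta_iter_coeff, hσ]
    ring
  -- factor P
  have hfact : P = (C a - X) ^ l * Q := by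
    rw [hP, hQ, ha, ← Finset.mul_prod_erase univ _ (Finset.mem_univ j)]
  obtain ⟨S, hS, hSe⟩ := theta_key a l Q l le_rfl
  have hQe : Q.eval a = ∏ i ∈ univ.erase j, (α i - α j) ^ l := by
    rw [hQ, eval_prod]
    refine Finset.prod_congr rfl fun i _ => ?_
    simp [ha]
  have hval : ((fun q : F[X] => X * derivative q)^[l] P).eval a
      = (-1) ^ l * (Nat.factorial l : F) * a ^ l * ∏ i ∈ univ.erase j, (α i - α j) ^ l := by
    rw [hfact, hS, Nat.sub_self, pow_zero, one_mul, hSe, Nat.descFactorial_self, hQe]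
    ring
  have heq : ∑ i ∈ range (m * l + 1), σ i * (i : F) ^ l * (α j) ^ i
      = (-1) ^ l * (Nat.factorial l : F) * (α j) ^ l * ∏ i ∈ univ.erase j, (α i - α j) ^ l := by
    rw [hsum, hval, ha]
  refine ⟨heq, ?_⟩
  rw [heq]
  refine mul_ne_zero (mul_ne_zero (mul_ne_zero ?_ ?_) ?_) ?_
  · exact pow_ne_zero _ (by norm_num)
  · exact_mod_cast Nat.cast_ne_zero.mpr (Nat.factorial_ne_zero l)
  · exact pow_ne_zero _ (hα0 j)
  · refine Finset.prod_ne_zero_iff.mpr fun i hi => ?_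
    refine pow_ne_zero _ (sub_ne_zero.mpr ?_)
    exact fun h => (Finset.mem_erase.mp hi).1 (hinj h)
end

section
/- Let K be a number field, α_1,…,α_m ∈ K, l ≥ 1, μ ∈ {0,1,…,m}, and let σ_i be defined by Π_{j=1}^m (α_j − w)^l = Σ_{i=0}^{ml} σ_i w^i. For j ∈ {1,…,m} set b_{l,μ,j} = (ml+μ)! Σ_{N=0}^{ml+μ−1} Σ_{h=0}^{min{ml,N}} σ_{ml−h} · ((N−h)!/(ml−h+μ)!) · α_j^{N−h}. Then for every Archimedean normalized absolute value ‖·‖_v of K, ‖b_{l,μ,j}‖_v ≤ ‖(ml+μ)!‖_v · (max{1, ‖α_j‖_v})^{ml} · (ml+m) · Π_{i=1}^m (‖α_i‖_v + max{1, ‖α_j‖_v})^l. -/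
open Polynomial Finset Nat NumberField

section Aux
variable {K : Type*} [Field K] [NumberField K] (v : InfinitePlace K)

lemma v_natCast (n : ℕ) : v ((n : ℕ) : K) = (n : ℝ) := by
  rw [← NumberField.InfinitePlace.norm_embedding_eq, map_natCast]
  simp

lemma coeff_dom_mul (P Q : K[X]) (P' Q' : ℝ[X])
    (hP : ∀ k, v (P.coeff k) ≤ P'.coeff k) (hQ : ∀ k, v (Q.coeff k) ≤ Q'.coeff k) :
    ∀ k, v ((P * Q).coeff k) ≤ (P' * Q').coeff k := by
  intro k
  rw [coeff_mul, coeff_mul]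
  refine le_trans (v.1.sum_le _ _) (Finset.sum_le_sum ?_)
  intro x _
  rw [map_mul]
  exact mul_le_mul (hP _) (hQ _) (v.1.nonneg _) ((v.1.nonneg _).trans (hP _))

lemma coeff_dom_one : ∀ k, v ((1 : K[X]).coeff k) ≤ (1 : ℝ[X]).coeff k := by
  intro k
  simp only [coeff_one]
  split_ifs <;> simp

lemma coeff_dom_pow (P : K[X]) (P' : ℝ[X])
    (h : ∀ k, v (P.coeff k) ≤ P'.coeff k) (n : ℕ) :
    ∀ k, v ((P ^ n).coeff k) ≤ (P' ^ n).coeff k := by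
  induction n with
  | zero => simpa using coeff_dom_one v
  | succ n ih =>
      rw [pow_succ, pow_succ]
      exact coeff_dom_mul v _ _ _ _ ih h

lemma coeff_dom_prod {ι : Type*} (s : Finset ι) (P : ι → K[X]) (P' : ι → ℝ[X])
    (h : ∀ i ∈ s, ∀ k, v ((P i).coeff k) ≤ (P' i).coeff k) :
    ∀ k, v ((∏ i ∈ s, P i).coeff k) ≤ (∏ i ∈ s, P' i).coeff k := by
  induction s using Finset.cons_induction with
  | empty => simpa using coeff_dom_one v
  | cons a s hne ih =>
      rw [Finset.prod_cons, Finset.prod_cons]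
      exact coeff_dom_mul v _ _ _ _ (h a (Finset.mem_cons_self a s))
        (ih fun i hi => h i (Finset.mem_cons_of_mem hi))

lemma coeff_dom_base (a : K) :
    ∀ k, v ((C a - X).coeff k) ≤ ((C (v a) + X : ℝ[X])).coeff k := by
  intro k
  match k with
  | 0 => simp
  | 1 => rw [coeff_sub]; simp only [coeff_C, coeff_X_one, if_neg one_ne_zero, zero_sub]; rw [show v (-1 : K) = v.1 (-1 : K) from rfl, v.1.map_neg, map_one]; simp
  | (k+2) => simp [coeff_C, coeff_X, v.1.map_neg]

lemma real_rpow_add_le {x y e : ℝ} (hx : 0 ≤ x) (hy : 0 ≤ y) (he : 0 ≤ e) (he1 : e ≤ 1) :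
    (x + y) ^ e ≤ x ^ e + y ^ e := by
  lift x to NNReal using hx
  lift y to NNReal using hy
  rw [← NNReal.coe_add, ← NNReal.coe_rpow, ← NNReal.coe_rpow, ← NNReal.coe_rpow,
    ← NNReal.coe_add, NNReal.coe_le_coe]
  exact NNReal.rpow_add_le_add_rpow _ _ he he1

end Aux

/-- The paper's normalised absolute value attached to an Archimedean place `w` of a
number field `K` of degree `κ`:  `‖x‖_w = (w x) ^ (mult w / κ)`. -/
noncomputable def infNorm (K : Type*) [Field K] [NumberField K]
    (w : InfinitePlace K) (x : K) : ℝ :=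
  (w x) ^ ((w.mult : ℝ) / (Module.finrank ℚ K : ℝ))

/-- with `σ_i` defined by `∏ j, (α j − w)^l = ∑ i, σ i * w^i` and
`b_{l,μ,j} = (ml+μ)! ∑_{N=0}^{ml+μ−1} ∑_{h=0}^{min(ml,N)} σ_{ml−h} ((N−h)!/(ml−h+μ)!) α_j^{N−h}`,
for every Archimedean normalised absolute value `‖·‖_v` of `K` one has
`‖b_{l,μ,j}‖_v ≤ ‖(ml+μ)!‖_v · (max 1 ‖α_j‖_v)^{ml} · (ml+m) · ∏ i, (‖α_i‖_v + max 1 ‖α_j‖_v)^l`. -/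
theorem pade_bj_archimedean_bound {K : Type*} [Field K] [NumberField K]
    {m : ℕ} (α : Fin m → K) (l μ : ℕ) (hl : 1 ≤ l) (hμ : μ ≤ m)
    (σ : ℕ → K)
    (hσ : ∀ i, σ i = (∏ j, (C (α j) - X) ^ l).coeff i)
    (j : Fin m) (v : InfinitePlace K) :
    infNorm K v (((m * l + μ)! : K) *
        ∑ N ∈ range (m * l + μ), ∑ h ∈ range (min (m * l) N + 1),
          σ (m * l - h) * (((N - h)! : K) / ((m * l - h + μ)! : K)) * (α j) ^ (N - h))
      ≤ infNorm K v (((m * l + μ)! : ℕ) : K) *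
          (max 1 (infNorm K v (α j))) ^ (m * l) * ((m * l + m : ℕ) : ℝ) *
          ∏ i, (infNorm K v (α i) + max 1 (infNorm K v (α j))) ^ l := by
  have hmM : m ≤ m * l := Nat.le_mul_of_pos_right m hl
  have hv0 : ∀ x : K, (0:ℝ) ≤ v x := fun x => v.1.nonneg x
  set M := m * l with hMdef
  set A : ℝ := max 1 (v (α j)) with hAdef
  have hA1 : (1 : ℝ) ≤ A := le_max_left _ _
  have hA0 : (0 : ℝ) ≤ A := zero_le_one.trans hA1
  set R : ℝ[X] := ∏ i, (C (v (α i)) + X) ^ l with hRdef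
  have hσv : ∀ k, v (σ k) ≤ R.coeff k := by
    intro k
    rw [hσ]
    exact coeff_dom_prod v _ _ _
      (fun i _ => coeff_dom_pow v _ _ (coeff_dom_base v (α i)) l) k
  have hdegR : R.natDegree ≤ M := by
    refine le_trans (natDegree_prod_le _ _) ?_
    refine le_trans (Finset.sum_le_sum (f := fun i : Fin m =>
      ((C (v (α i)) + X : ℝ[X]) ^ l).natDegree) (g := fun _ : Fin m => l) ?_) ?_
    · intro i _
      refine le_trans (natDegree_pow_le) ?_
      rw [add_comm (C (v (α i))) X, natDegree_X_add_C, mul_one]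
    · simp [Finset.sum_const, hMdef]
  set Pw : ℝ := ∏ i, (v (α i) + A) ^ l with hPwdef
  have hPw0 : 0 ≤ Pw :=
    Finset.prod_nonneg fun i _ => pow_nonneg (add_nonneg (hv0 _) hA0) l
  have hevalR : ∑ k ∈ range (M + 1), R.coeff k * A ^ k = Pw := by
    rw [← Polynomial.eval_eq_sum_range' (Nat.lt_succ_of_le hdegR)]
    simp [hRdef, hPwdef, eval_prod]
  have hcoeffsum : ∑ k ∈ range (M + 1), v (σ k) * A ^ k ≤ Pw := by
    rw [← hevalR]
    exact Finset.sum_le_sum fun k _ =>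
      mul_le_mul_of_nonneg_right (hσv k) (pow_nonneg hA0 k)
  set S : K := ∑ N ∈ range (M + μ), ∑ h ∈ range (min M N + 1),
      σ (M - h) * (((N - h)! : K) / ((M - h + μ)! : K)) * (α j) ^ (N - h) with hSdef
  -- main archimedean estimate at the level of `v`
  have hS : v S ≤ A ^ M * ((M + m : ℕ) : ℝ) * Pw := by
    have hinner : ∀ N ∈ range (M + μ),
        v (∑ h ∈ range (min M N + 1),
            σ (M - h) * (((N - h)! : K) / ((M - h + μ)! : K)) * (α j) ^ (N - h))
          ≤ Pw * A ^ M := by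
      intro N hN
      rw [Finset.mem_range] at hN
      have hterm : ∀ h ∈ range (min M N + 1),
          v (σ (M - h) * (((N - h)! : K) / ((M - h + μ)! : K)) * (α j) ^ (N - h))
            ≤ v (σ (M - h)) * A ^ (M - h) * A ^ M := by
        intro h hh
        rw [Finset.mem_range, Nat.lt_succ_iff] at hh
        have hhM : h ≤ M := le_trans hh (min_le_left _ _)
        have hhN : h ≤ N := le_trans hh (min_le_right _ _)
        rw [map_mul, map_mul, map_div₀, map_pow]
        have h1 : v (((N - h)! : K)) / v (((M - h + μ)! : K)) ≤ 1 := by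
          rw [v_natCast, v_natCast]
          refine div_le_one_of_le₀ ?_ (by positivity)
          exact_mod_cast Nat.cast_le.2 (Nat.factorial_le (by omega))
        have h2 : v (α j) ^ (N - h) ≤ A ^ (M - h) * A ^ M := by
          calc v (α j) ^ (N - h) ≤ A ^ (N - h) :=
                pow_le_pow_left₀ (hv0 _) (le_max_right _ _) _
            _ ≤ A ^ ((M - h) + M) := pow_le_pow_right₀ hA1 (by omega)
            _ = A ^ (M - h) * A ^ M := pow_add _ _ _
        calc v (σ (M - h)) * (v (((N - h)! : K)) / v (((M - h + μ)! : K))) *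
              v (α j) ^ (N - h)
            ≤ v (σ (M - h)) * 1 * (A ^ (M - h) * A ^ M) := by
              refine mul_le_mul ?_ h2 (pow_nonneg (hv0 _) _)
                (by positivity)
              exact mul_le_mul_of_nonneg_left h1 (hv0 _)
          _ = v (σ (M - h)) * A ^ (M - h) * A ^ M := by ring
      have hre : ∑ h ∈ range (min M N + 1), v (σ (M - h)) * A ^ (M - h)
          ≤ ∑ k ∈ range (M + 1), v (σ k) * A ^ k := by
        rw [← Finset.sum_image (f := fun k => v (σ k) * A ^ k)
          (g := fun h => M - h) (fun a ha b hb hab => by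
            rw [Finset.mem_coe, Finset.mem_range, Nat.lt_succ_iff] at ha hb
            have ha' : a ≤ M := le_trans ha (min_le_left _ _)
            have hb' : b ≤ M := le_trans hb (min_le_left _ _)
            simp only at hab
            omega)]
        refine Finset.sum_le_sum_of_subset_of_nonneg ?_ ?_
        · intro k hk
          simp only [Finset.mem_image, Finset.mem_range] at hk ⊢
          obtain ⟨a, _, rfl⟩ := hk
          omega
        · intro k _ _
          exact mul_nonneg (hv0 _) (pow_nonneg hA0 _)
      calc v (∑ h ∈ range (min M N + 1),
              σ (M - h) * (((N - h)! : K) / ((M - h + μ)! : K)) * (α j) ^ (N - h))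
          ≤ ∑ h ∈ range (min M N + 1),
              v (σ (M - h) * (((N - h)! : K) / ((M - h + μ)! : K)) * (α j) ^ (N - h)) :=
            v.1.sum_le _ _
        _ ≤ ∑ h ∈ range (min M N + 1), v (σ (M - h)) * A ^ (M - h) * A ^ M :=
            Finset.sum_le_sum hterm
        _ = (∑ h ∈ range (min M N + 1), v (σ (M - h)) * A ^ (M - h)) * A ^ M := by
            rw [Finset.sum_mul]
        _ ≤ Pw * A ^ M := by
            refine mul_le_mul_of_nonneg_right (le_trans hre hcoeffsum) (pow_nonneg hA0 _)
    calc v S ≤ ∑ N ∈ range (M + μ), v (∑ h ∈ range (min M N + 1),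
            σ (M - h) * (((N - h)! : K) / ((M - h + μ)! : K)) * (α j) ^ (N - h)) :=
          v.1.sum_le _ _
      _ ≤ ∑ _N ∈ range (M + μ), Pw * A ^ M := Finset.sum_le_sum hinner
      _ = ((M + μ : ℕ) : ℝ) * (Pw * A ^ M) := by
          rw [Finset.sum_const, Finset.card_range, nsmul_eq_mul]
      _ ≤ ((M + m : ℕ) : ℝ) * (Pw * A ^ M) := by
          refine mul_le_mul_of_nonneg_right ?_ (mul_nonneg hPw0 (pow_nonneg hA0 _))
          exact_mod_cast Nat.add_le_add_left hμ M
      _ = A ^ M * ((M + m : ℕ) : ℝ) * Pw := by ring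
  -- now pass to the normalised absolute value
  set e : ℝ := (v.mult : ℝ) / (Module.finrank ℚ K : ℝ) with hedef
  have hK0 : (0 : ℝ) < (Module.finrank ℚ K : ℝ) := by
    exact_mod_cast Module.finrank_pos
  have he0 : 0 < e := by
    refine div_pos ?_ hK0
    exact_mod_cast v.mult_pos
  have he1 : e ≤ 1 := by
    rw [div_le_one hK0]
    exact_mod_cast le_trans
      (Finset.single_le_sum (f := fun w : InfinitePlace K => w.mult)
        (fun i _ => Nat.zero_le _) (Finset.mem_univ v))
      (le_of_eq (NumberField.InfinitePlace.sum_mult_eq))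
  have infNorm_eq : ∀ x : K, infNorm K v x = (v x) ^ e := fun x => rfl
  have hvx : (0:ℝ) ≤ v (α j) := hv0 _
  have hAe : A ^ e = max 1 (v (α j) ^ e) := by
    rcases le_total (v (α j)) 1 with h | h
    · rw [hAdef, max_eq_left h, Real.one_rpow,
        max_eq_left (Real.rpow_le_one hvx h he0.le)]
    · rw [hAdef, max_eq_right h, max_eq_right (Real.one_le_rpow h he0.le)]
  have hpowswap : ∀ (x : ℝ), 0 ≤ x → ∀ n : ℕ, (x ^ n) ^ e = (x ^ e) ^ n := by
    intro x hx n
    rw [← Real.rpow_natCast x n, ← Real.rpow_natCast (x ^ e) n,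
      ← Real.rpow_mul hx, ← Real.rpow_mul hx, mul_comm]
  calc infNorm K v (((M + μ)! : K) * S)
      = (v (((M + μ)! : K)) * v S) ^ e := by rw [infNorm_eq, map_mul]
    _ = v (((M + μ)! : K)) ^ e * (v S) ^ e :=
        Real.mul_rpow (hv0 _) (hv0 _)
    _ ≤ v (((M + μ)! : K)) ^ e * ((A ^ M * ((M + m : ℕ) : ℝ) * Pw) ^ e) := by
        refine mul_le_mul_of_nonneg_left ?_ (Real.rpow_nonneg (hv0 _) e)
        exact Real.rpow_le_rpow (hv0 _) hS he0.le
    _ = v (((M + μ)! : K)) ^ e *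
          ((A ^ e) ^ M * (((M + m : ℕ) : ℝ)) ^ e * Pw ^ e) := by
        rw [Real.mul_rpow (by positivity) hPw0,
          Real.mul_rpow (pow_nonneg hA0 M) (by positivity),
          hpowswap A hA0 M]
    _ ≤ v (((M + μ)! : K)) ^ e *
          ((A ^ e) ^ M * ((M + m : ℕ) : ℝ) *
            ∏ i, (v (α i) ^ e + A ^ e) ^ l) := by
        refine mul_le_mul_of_nonneg_left ?_ (Real.rpow_nonneg (hv0 _) e)
        have h1 : (((M + m : ℕ) : ℝ)) ^ e ≤ ((M + m : ℕ) : ℝ) := by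
          rcases Nat.eq_zero_or_pos (M + m) with h0 | h0
          · rw [h0]
            simp [Real.zero_rpow he0.ne']
          · have hx1 : (1 : ℝ) ≤ ((M + m : ℕ) : ℝ) := by exact_mod_cast h0
            calc (((M + m : ℕ) : ℝ)) ^ e ≤ (((M + m : ℕ) : ℝ)) ^ (1 : ℝ) :=
                  Real.rpow_le_rpow_of_exponent_le hx1 he1
              _ = ((M + m : ℕ) : ℝ) := Real.rpow_one _
        have h2 : Pw ^ e ≤ ∏ i, (v (α i) ^ e + A ^ e) ^ l := by
          rw [hPwdef, ← Real.finset_prod_rpow _ _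
            (fun i _ => pow_nonneg (add_nonneg (hv0 _) hA0) l) e]
          refine Finset.prod_le_prod (fun i _ => Real.rpow_nonneg
            (pow_nonneg (add_nonneg (hv0 _) hA0) l) e) ?_
          intro i _
          rw [hpowswap _ (add_nonneg (hv0 _) hA0) l]
          exact pow_le_pow_left₀ (Real.rpow_nonneg (add_nonneg (hv0 _) hA0) e)
            (real_rpow_add_le (hv0 _) hA0 he0.le he1) l
        calc (A ^ e) ^ M * (((M + m : ℕ) : ℝ)) ^ e * Pw ^ e
            ≤ (A ^ e) ^ M * ((M + m : ℕ) : ℝ) * Pw ^ e := by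
              refine mul_le_mul_of_nonneg_right
                (mul_le_mul_of_nonneg_left h1 (pow_nonneg (Real.rpow_nonneg hA0 e) M))
                (Real.rpow_nonneg hPw0 e)
          _ ≤ (A ^ e) ^ M * ((M + m : ℕ) : ℝ) *
                ∏ i, (v (α i) ^ e + A ^ e) ^ l := by
              refine mul_le_mul_of_nonneg_left h2 ?_
              positivity
    _ = infNorm K v (((M + μ)! : ℕ) : K) *
          (max 1 (infNorm K v (α j))) ^ M * ((M + m : ℕ) : ℝ) *
          ∏ i, (infNorm K v (α i) + max 1 (infNorm K v (α j))) ^ l := by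
        simp only [infNorm_eq, ← hAe]
        ring
end
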